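/- The sum over all partitions λ with |λ| ≤ n of (k(n+1))!·(n+1−|λ|) / ((n+1)·m_λ·(k(n+1)−ℓ(λ))!) equals (1/(k(n+1)+1)) * binomial((k+1)(n+1), n+1), the k-Fuss-Catalan number for n+1. -/

import Mathlib

/-- `m_λ = ∏_i m_i(λ)!`, the product of factorials of multiplicities of parts. -/
def mfac (lam : Multiset ℕ) : ℕ := lam.toFinset.prod fun i => (lam.count i).factorial

open Finset
variable {α : Type*} [DecidableEq α]
def shapeF (s : Finset α) (f : α → ℕ) : Multiset ℕ := (s.val.map f).filter (· ≠ 0)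
def FF (s : Finset α) (t : Multiset ℕ) : Finset (α → ℕ) :=
  (Finset.piAntidiag s t.sum).filter (fun f => shapeF s f = t)

lemma mem_FF {s : Finset α} {t : Multiset ℕ} {f : α → ℕ} :
    f ∈ FF s t ↔ (∑ i ∈ s, f i = t.sum ∧ ∀ i, f i ≠ 0 → i ∈ s) ∧ shapeF s f = t := by
  simp [FF, Finset.mem_filter, Finset.mem_piAntidiag, and_assoc]

lemma shape_split {s S : Finset α} (hS : S ⊆ s) (f : α → ℕ) :
    shapeF s f = (S.val.map f).filter (· ≠ 0) + shapeF (s \ S) f := by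
  unfold shapeF
  rw [← Multiset.filter_add, ← Multiset.map_add]
  congr 2
  have h1 : (s \ S).val = s.val - S.val := Finset.sdiff_val s S
  rw [h1, add_tsub_cancel_of_le (Finset.val_le_iff.2 hS)]

lemma map_eq_replicate {S : Finset α} {f : α → ℕ} {r v : ℕ} (hc : S.card = r)
    (hfv : ∀ a ∈ S, f a = v) : S.val.map f = Multiset.replicate r v := by
  refine Multiset.eq_replicate.2 ⟨by simp [hc], ?_⟩
  intro b hb
  obtain ⟨a, ha, rfl⟩ := Multiset.mem_map.1 hb
  exact hfv a ha

lemma fiber_card {s S : Finset α} {t : Multiset ℕ} {v r : ℕ} (hv : v ∈ t) (hv0 : v ≠ 0)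
    (hr : t.count v = r) (hS : S ∈ Finset.powersetCard r s) :
    ((FF s t).filter (fun f => s.filter (fun a => f a = v) = S)).card
      = (FF (s \ S) (t.filter (· ≠ v))).card := by
  obtain ⟨hSs, hScard⟩ := Finset.mem_powersetCard.1 hS
  set t' : Multiset ℕ := t.filter (· ≠ v) with ht'
  have hrepl : t.filter (· = v) = Multiset.replicate r v := by
    rw [Multiset.filter_eq', hr]
  have hsplit : Multiset.replicate r v + t' = t := by
    rw [← hrepl, ht']
    exact Multiset.filter_add_not _ t
  have hvt' : v ∉ t' := fun h => (Multiset.of_mem_filter h) rfl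
  have hsum' : r * v + t'.sum = t.sum := by
    rw [← hsplit, Multiset.sum_add, Multiset.sum_replicate, smul_eq_mul]
  refine Finset.card_bij' (fun f _ => fun a => if a ∈ S then 0 else f a)
    (fun g _ => fun a => if a ∈ S then v else g a) ?_ ?_ ?_ ?_
  · -- forward membership
    intro f hf
    rw [Finset.mem_filter, mem_FF] at hf
    obtain ⟨⟨⟨hsum, hsupp⟩, hshape⟩, hfib⟩ := hf
    have hfv : ∀ a ∈ S, f a = v := by intro a ha; rw [← hfib] at ha; exact (Finset.mem_filter.1 ha).2
    have hrep : S.val.map f = Multiset.replicate r v := map_eq_replicate hScard hfv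
    have hsh2 : shapeF (s \ S) f = t' := by
      have h1 := shape_split hSs f
      rw [hshape, hrep, Multiset.filter_eq_self.2
        (fun b hb => by rw [Multiset.eq_of_mem_replicate hb]; exact hv0)] at h1
      exact (add_left_cancel (hsplit.trans h1)).symm
    have hSsum : ∑ a ∈ S, f a = r * v := by
      rw [Finset.sum_congr rfl hfv, Finset.sum_const, smul_eq_mul, hScard]
    have hsdsum : ∑ a ∈ s \ S, f a = t'.sum := by
      have h2 := Finset.sum_sdiff (f := f) hSs
      rw [hSsum, hsum] at h2
      omega
    rw [mem_FF]
    refine ⟨⟨?_, ?_⟩, ?_⟩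
    · rw [Finset.sum_congr rfl (fun a ha => if_neg (Finset.mem_sdiff.1 ha).2)]
      exact hsdsum
    · intro i hi
      by_cases hiS : i ∈ S
      · simp [hiS] at hi
      · rw [if_neg hiS] at hi
        exact Finset.mem_sdiff.2 ⟨hsupp i hi, hiS⟩
    · rw [← hsh2]
      unfold shapeF
      congr 1
      refine Multiset.map_congr rfl fun a ha => ?_
      exact if_neg (Finset.mem_sdiff.1 (Finset.mem_val.mp ha)).2
  · -- backward membership
    intro g hg
    rw [mem_FF] at hg
    obtain ⟨⟨hgsum, hgsupp⟩, hgshape⟩ := hg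
    have hgv : ∀ a, g a ≠ v := by
      intro a h
      by_cases hga : g a = 0
      · exact hv0 (hga ▸ h).symm
      · have hmem : g a ∈ shapeF (s \ S) g := by
          refine Multiset.mem_filter.2 ⟨?_, hga⟩
          exact Multiset.mem_map.2 ⟨a, Finset.mem_val.mpr (hgsupp a hga), rfl⟩
        rw [hgshape, h] at hmem
        exact hvt' hmem
    have hshape2 : shapeF (s \ S) (fun a => if a ∈ S then v else g a) = t' := by
      rw [← hgshape]
      unfold shapeF
      congr 1
      refine Multiset.map_congr rfl fun a ha => ?_
      exact if_neg (Finset.mem_sdiff.1 (Finset.mem_val.mp ha)).2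
    rw [Finset.mem_filter, mem_FF]
    refine ⟨⟨⟨?_, ?_⟩, ?_⟩, ?_⟩
    · rw [← Finset.sum_sdiff (f := fun a => if a ∈ S then v else g a) hSs]
      have e1 : ∑ a ∈ s \ S, (if a ∈ S then v else g a) = t'.sum := by
        rw [Finset.sum_congr rfl (fun a ha => if_neg (Finset.mem_sdiff.1 ha).2)]
        exact hgsum
      have e2 : ∑ a ∈ S, (if a ∈ S then v else g a) = r * v := by
        rw [Finset.sum_congr rfl (fun a ha => if_pos ha), Finset.sum_const, smul_eq_mul, hScard]
      rw [e1, e2, ← hsum']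
      ring
    · intro i hi
      by_cases hiS : i ∈ S
      · exact hSs hiS
      · rw [if_neg hiS] at hi
        exact Finset.mem_sdiff.1 (hgsupp i hi) |>.1
    · rw [shape_split hSs, hshape2]
      have hrep : S.val.map (fun a => if a ∈ S then v else g a) = Multiset.replicate r v :=
        map_eq_replicate hScard (fun a ha => if_pos ha)
      rw [hrep, Multiset.filter_eq_self.2
        (fun b hb => by rw [Multiset.eq_of_mem_replicate hb]; exact hv0), hsplit]
    · ext a
      simp only [Finset.mem_filter]
      constructor
      · rintro ⟨has, hav⟩
        by_contra haS
        rw [if_neg haS] at hav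
        exact hgv a hav
      · intro haS
        exact ⟨hSs haS, if_pos haS⟩
  · -- left inverse
    intro f hf
    rw [Finset.mem_filter, mem_FF] at hf
    obtain ⟨⟨_, _⟩, hfib⟩ := hf
    have hfv : ∀ a ∈ S, f a = v := by intro a ha; rw [← hfib] at ha; exact (Finset.mem_filter.1 ha).2
    funext a
    by_cases haS : a ∈ S
    · simp [haS, hfv a haS]
    · simp [haS]
  · -- right inverse
    intro g hg
    rw [mem_FF] at hg
    obtain ⟨⟨_, hgsupp⟩, _⟩ := hg
    funext a
    by_cases haS : a ∈ S
    · have : g a = 0 := by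
        by_contra h
        exact (Finset.mem_sdiff.1 (hgsupp a h)).2 haS
      simp [haS, this]
    · simp [haS]

lemma mfac_zero : mfac 0 = 1 := by simp [mfac]

lemma mfac_eq {t : Multiset ℕ} {v : ℕ} (hv : v ∈ t) :
    mfac t = (t.count v).factorial * mfac (t.filter (· ≠ v)) := by
  unfold mfac
  rw [Multiset.toFinset_filter, Finset.filter_ne', ← Finset.mul_prod_erase _ _ (Multiset.mem_toFinset.2 hv)]
  congr 1
  refine Finset.prod_congr rfl fun i hi => ?_
  rw [Multiset.count_filter]
  simp [Finset.mem_erase.1 hi |>.1]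

lemma FF_decomp {s : Finset α} {t : Multiset ℕ} {v r : ℕ} (hv : v ∈ t) (hv0 : v ≠ 0)
    (hr : t.count v = r) :
    (FF s t).card = ∑ S ∈ Finset.powersetCard r s, (FF (s \ S) (t.filter (· ≠ v))).card := by
  rw [Finset.card_eq_sum_card_fiberwise (f := fun f => s.filter (fun a => f a = v))
    (t := Finset.powersetCard r s) ?_]
  · exact Finset.sum_congr rfl fun S hS => fiber_card hv hv0 hr hS
  · intro f hf
    simp only [Finset.mem_coe] at hf ⊢
    rw [mem_FF] at hf
    obtain ⟨⟨_, _⟩, hshape⟩ := hf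
    rw [Finset.mem_powersetCard]
    refine ⟨Finset.filter_subset _ _, ?_⟩
    have h1 : Multiset.count v (shapeF s f) = r := by rw [hshape, hr]
    unfold shapeF at h1
    rw [Multiset.count_filter, if_pos hv0, Multiset.count_map] at h1
    rw [← h1, Finset.card_def, Finset.filter_val]
    congr 1
    exact Multiset.filter_congr fun x _ => eq_comm

lemma card_le_sum {t : Multiset ℕ} (h0 : 0 ∉ t) : Multiset.card t ≤ t.sum := by
  induction t using Multiset.induction with
  | empty => simp
  | cons a s ih =>
    simp only [Multiset.mem_cons, not_or] at h0
    rw [Multiset.card_cons, Multiset.sum_cons]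
    have h1 := ih h0.2
    have h2 : 1 ≤ a := Nat.one_le_iff_ne_zero.2 (Ne.symm h0.1)
    omega

lemma FF_card_mul (t : Multiset ℕ) (h0 : 0 ∉ t) :
    ∀ s : Finset α, Multiset.card t ≤ s.card →
      (FF s t).card * (mfac t * (s.card - Multiset.card t).factorial) = (s.card).factorial := by
  induction t using Multiset.strongInductionOn with
  | _ t ih =>
  intro s hts
  rcases (em (t = 0)).imp id (fun h => Multiset.exists_mem_of_ne_zero h) with rfl | ⟨v, hv⟩
  · have hFF : FF s 0 = {0} := by
      unfold FF
      rw [Multiset.sum_zero, Finset.piAntidiag_zero, Finset.filter_eq_self.2]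
      intro f hf
      rw [Finset.mem_singleton] at hf
      subst hf
      unfold shapeF
      rw [Multiset.filter_eq_nil.2]
      intro b hb
      obtain ⟨a, _, rfl⟩ := Multiset.mem_map.1 hb
      simp
    simp [hFF, mfac_zero]
  · have hv0 : v ≠ 0 := fun h => h0 (h ▸ hv)
    set r := t.count v with hr
    set t' := t.filter (· ≠ v) with ht'
    set l := Multiset.card t with hl
    set c := s.card with hc
    have hvt' : v ∉ t' := fun h => (Multiset.of_mem_filter h) rfl
    have ht'lt : t' < t := lt_of_le_of_ne (Multiset.filter_le _ t) (fun h => hvt' (h ▸ hv))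
    have ht'0 : 0 ∉ t' := fun h => h0 (Multiset.mem_of_mem_filter h)
    have hr1 : 1 ≤ r := Multiset.count_pos.2 hv
    have hrl : r ≤ l := Multiset.count_le_card v t
    have hcard' : Multiset.card t' + r = l := by
      have h1 : Multiset.filter (· = v) t + t' = t := Multiset.filter_add_not _ t
      have h2 := congrArg Multiset.card h1
      rw [Multiset.card_add, Multiset.filter_eq', Multiset.card_replicate] at h2
      omega
    rw [FF_decomp hv hv0 rfl]
    rw [Finset.sum_mul]
    have hterm : ∀ S ∈ Finset.powersetCard r s,
        (FF (s \ S) t').card * (mfac t * (c - l).factorial)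
          = r.factorial * (c - r).factorial := by
      intro S hS
      obtain ⟨hSs, hScard⟩ := Finset.mem_powersetCard.1 hS
      have hsd : (s \ S).card = c - r := by rw [Finset.card_sdiff_of_subset hSs, hScard]
      have hIH := ih t' ht'lt ht'0 (s \ S) (by rw [hsd]; omega)
      rw [hsd] at hIH
      have he : c - r - Multiset.card t' = c - l := by omega
      rw [he] at hIH
      rw [mfac_eq hv, ← hr, ← ht']
      calc (FF (s \ S) t').card * (r.factorial * mfac t' * (c - l).factorial)
          = r.factorial * ((FF (s \ S) t').card * (mfac t' * (c - l).factorial)) := by ring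
        _ = r.factorial * (c - r).factorial := by rw [hIH]
    rw [Finset.sum_congr rfl hterm, Finset.sum_const, Finset.card_powersetCard, smul_eq_mul, ← hc]
    rw [← mul_assoc]
    exact Nat.choose_mul_factorial_mul_factorial (le_trans hrl hts)

lemma swap_mem_iff {s : Finset α} {i j : α} (hi : i ∈ s) (hj : j ∈ s) (a : α) :
    Equiv.swap i j a ∈ s ↔ a ∈ s := by
  rcases eq_or_ne a i with rfl | hai
  · simp [Equiv.swap_apply_left, hi, hj]
  rcases eq_or_ne a j with rfl | haj
  · simp [Equiv.swap_apply_right, hi, hj]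
  · rw [Equiv.swap_apply_of_ne_of_ne hai haj]

lemma map_swap_val {s : Finset α} {i j : α} (hi : i ∈ s) (hj : j ∈ s) :
    s.val.map (Equiv.swap i j) = s.val := by
  have hnd : (s.val.map (Equiv.swap i j)).Nodup := s.nodup.map (Equiv.swap i j).injective
  have hsub : s.val.map (Equiv.swap i j) ⊆ s.val := by
    intro x hx
    obtain ⟨a, ha, rfl⟩ := Multiset.mem_map.1 hx
    exact Finset.mem_val.mpr ((swap_mem_iff hi hj a).2 (Finset.mem_val.mp ha))
  exact Multiset.eq_of_le_of_card_le ((Multiset.le_iff_subset hnd).2 hsub) (by simp)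

lemma FF_swap_mem {s : Finset α} {t : Multiset ℕ} {i j : α} (hi : i ∈ s) (hj : j ∈ s)
    {f : α → ℕ} (hf : f ∈ FF s t) : (f ∘ Equiv.swap i j) ∈ FF s t := by
  rw [mem_FF] at hf ⊢
  obtain ⟨⟨hsum, hsupp⟩, hshape⟩ := hf
  refine ⟨⟨?_, ?_⟩, ?_⟩
  · rw [← hsum, Finset.sum_eq_multiset_sum, Finset.sum_eq_multiset_sum,
      ← Multiset.map_map, map_swap_val hi hj]
  · intro a ha
    exact (swap_mem_iff hi hj a).1 (hsupp _ ha)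
  · rw [← hshape]
    unfold shapeF
    rw [← Multiset.map_map, map_swap_val hi hj]

lemma FF_coord_sum_const {s : Finset α} {t : Multiset ℕ} {i j : α} (hi : i ∈ s) (hj : j ∈ s) :
    ∑ f ∈ FF s t, f i = ∑ f ∈ FF s t, f j := by
  refine Finset.sum_bij' (fun f _ => f ∘ Equiv.swap i j) (fun f _ => f ∘ Equiv.swap i j)
    (fun f hf => FF_swap_mem hi hj hf) (fun f hf => FF_swap_mem hi hj hf) ?_ ?_ ?_
  · intro f _
    funext a
    simp [Function.comp, Equiv.swap_apply_self]
  · intro f _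
    funext a
    simp [Function.comp, Equiv.swap_apply_self]
  · intro f _
    simp [Function.comp, Equiv.swap_apply_right]

lemma dvd_sum_mul_card {K : ℕ} (hK : 0 < K) (t : Multiset ℕ) :
    K ∣ t.sum * (FF (univ : Finset (Fin K)) t).card := by
  set i0 : Fin K := ⟨0, hK⟩
  have h1 : ∑ f ∈ FF (univ : Finset (Fin K)) t, ∑ i : Fin K, f i
      = t.sum * (FF (univ : Finset (Fin K)) t).card := by
    rw [Finset.sum_congr rfl (fun f hf => ((mem_FF.1 hf).1).1), Finset.sum_const, smul_eq_mul,
      mul_comm]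
  have h2 : ∑ f ∈ FF (univ : Finset (Fin K)) t, ∑ i : Fin K, f i
      = K * ∑ f ∈ FF (univ : Finset (Fin K)) t, f i0 := by
    rw [Finset.sum_comm]
    rw [Finset.sum_congr rfl (fun i _ => FF_coord_sum_const (Finset.mem_univ i) (Finset.mem_univ i0))]
    rw [Finset.sum_const, smul_eq_mul, Finset.card_univ, Fintype.card_fin]
  exact ⟨_, by rw [← h1, h2]⟩

lemma partition_sum_card {K m : ℕ} :
    ∑ P : Nat.Partition m, (FF (univ : Finset (Fin K)) P.parts).card
      = (K + m - 1).choose m := by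
  classical
  have h1 : (Finset.piAntidiag (univ : Finset (Fin K)) m).card = (K + m - 1).choose m := by
    rw [← Finset.map_sym_eq_piAntidiag, Finset.card_map, Finset.sym_univ, Finset.card_univ,
      Sym.card_sym_eq_choose, Fintype.card_fin]
  set g : (Fin K → ℕ) → Nat.Partition m := fun f =>
    if h : ((univ : Finset (Fin K)).val.map f).sum = m then Nat.Partition.ofSums m _ h
    else ⟨Multiset.replicate m 1,
      fun hi => by rw [Multiset.eq_of_mem_replicate hi]; norm_num, by simp⟩ with hg
  rw [← h1, Finset.card_eq_sum_card_fiberwise (f := g) (t := Finset.univ)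
    (fun _ _ => Finset.mem_univ _)]
  refine Finset.sum_congr rfl fun P _ => ?_
  congr 1
  ext f
  rw [Finset.mem_filter, mem_FF, Finset.mem_piAntidiag]
  have hsum_eq : ∑ i ∈ (univ : Finset (Fin K)), f i = ((univ : Finset (Fin K)).val.map f).sum :=
    Finset.sum_eq_multiset_sum _ _
  constructor
  · rintro ⟨⟨hsum, hsupp⟩, hshape⟩
    have hsm : ∑ i ∈ (univ : Finset (Fin K)), f i = m := by rw [hsum, P.parts_sum]
    have hm : ((univ : Finset (Fin K)).val.map f).sum = m := by rw [← hsum_eq, hsm]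
    refine ⟨⟨hsm, hsupp⟩, ?_⟩
    rw [hg]
    simp only [dif_pos hm]
    ext1
    rw [Nat.Partition.ofSums_parts]
    exact hshape
  · rintro ⟨⟨hsum, hsupp⟩, hgf⟩
    have hm : ((univ : Finset (Fin K)).val.map f).sum = m := by rw [← hsum_eq, hsum]
    rw [hg] at hgf
    simp only [dif_pos hm] at hgf
    have hparts := congrArg Nat.Partition.parts hgf
    rw [Nat.Partition.ofSums_parts] at hparts
    exact ⟨⟨by rw [hsum, P.parts_sum], hsupp⟩, hparts⟩

lemma hs1 (K : ℕ) (hK : 1 ≤ K) (M : ℕ) :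
    ∑ m ∈ Finset.range (M + 1), (K - 1 + m).choose m = (K + M).choose M := by
  induction M with
  | zero => simp
  | succ M ih =>
    rw [Finset.sum_range_succ, ih]
    have h1 : K - 1 + (M + 1) = K + M := by omega
    have h2 : K + (M + 1) = (K + M) + 1 := by omega
    rw [h1, h2, Nat.choose_succ_succ']

lemma hs2 (K : ℕ) (hK : 1 ≤ K) (N : ℕ) :
    ∑ m ∈ Finset.range N, (N - m) * (K - 1 + m).choose m = (N + K).choose (K + 1) := by
  induction N with
  | zero => simp [Nat.choose_eq_zero_of_lt (by omega : K < K + 1)]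
  | succ N ih =>
    have key : ∀ m ∈ Finset.range (N + 1),
        (N + 1 - m) * (K - 1 + m).choose m
          = (N - m) * (K - 1 + m).choose m + (K - 1 + m).choose m := by
      intro m hm
      rw [Finset.mem_range] at hm
      have : N + 1 - m = (N - m) + 1 := by omega
      rw [this]
      ring
    rw [Finset.sum_congr rfl key, Finset.sum_add_distrib, Finset.sum_range_succ (f := fun m => (N - m) * (K - 1 + m).choose m), Nat.sub_self, zero_mul, add_zero, ih, hs1 K hK]
    have h2 : N + 1 + K = (N + K) + 1 := by omega
    have h3 : (K + N).choose N = (N + K).choose K := by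
      rw [add_comm K N]
      have := Nat.choose_symm (n := N + K) (k := K) (by omega)
      rwa [Nat.add_sub_cancel] at this
    rw [h2, Nat.choose_succ_succ', h3, add_comm ((N+K).choose K)]


/-- The sum over all partitions `λ` with `|λ| ≤ n` of
`(k(n+1))!·(n+1-|λ|) / ((n+1)·m_λ·(k(n+1)-ℓ(λ))!)` equals the `k`-Fuss–Catalan number
`(1/(k(n+1)+1)) * C((k+1)(n+1), n+1)`. -/
theorem stmt_12 (k n : ℕ) (hk : 0 < k) :
    ∑ m ∈ Finset.range (n + 1), ∑ P : Nat.Partition m,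
        (k * (n + 1)).factorial * (n + 1 - m) /
          ((n + 1) * mfac P.parts * (k * (n + 1) - Multiset.card P.parts).factorial) =
      Nat.choose ((k + 1) * (n + 1)) (n + 1) / (k * (n + 1) + 1) := by
  set N := n + 1 with hN
  set K := k * (n + 1) with hK
  have hNpos : 0 < N := Nat.succ_pos n
  have hKpos : 0 < K := Nat.mul_pos hk hNpos
  have hNK : N ≤ K := Nat.le_mul_of_pos_left N hk
  have hNdvdK : N ∣ K := ⟨k, mul_comm k N⟩
  -- termwise rewriting
  have hterm : ∀ m ∈ Finset.range (n + 1), ∀ P : Nat.Partition m,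
      K.factorial * (N - m) /
          (N * mfac P.parts * (K - Multiset.card P.parts).factorial)
        = (FF (Finset.univ : Finset (Fin K)) P.parts).card * (N - m) / N := by
    intro m hm P
    have h0 : (0 : ℕ) ∉ P.parts := fun h => lt_irrefl 0 (P.parts_pos h)
    have hcard : Multiset.card P.parts ≤ K := by
      have h1 := card_le_sum h0
      rw [P.parts_sum] at h1
      rw [Finset.mem_range] at hm
      omega
    have hA := FF_card_mul P.parts h0 (Finset.univ : Finset (Fin K))
      (by rw [Finset.card_univ, Fintype.card_fin]; exact hcard)
    rw [Finset.card_univ, Fintype.card_fin] at hA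
    calc K.factorial * (N - m) /
          (N * mfac P.parts * (K - Multiset.card P.parts).factorial)
        = ((FF (Finset.univ : Finset (Fin K)) P.parts).card * (N - m))
            * (mfac P.parts * (K - Multiset.card P.parts).factorial)
            / (N * (mfac P.parts * (K - Multiset.card P.parts).factorial)) := by
          rw [← hA]; ring_nf
      _ = (FF (Finset.univ : Finset (Fin K)) P.parts).card * (N - m) / N := by
          have hpos : 0 < mfac P.parts * (K - Multiset.card P.parts).factorial := by
            apply Nat.mul_pos _ (Nat.factorial_pos _)
            unfold mfac
            exact Finset.prod_pos fun i _ => Nat.factorial_pos _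
          rw [Nat.mul_div_mul_right _ _ hpos]
  have hdvd : ∀ m ∈ Finset.range (n + 1), ∀ P : Nat.Partition m,
      N ∣ (FF (Finset.univ : Finset (Fin K)) P.parts).card * (N - m) := by
    intro m hm P
    have h1 : K ∣ m * (FF (Finset.univ : Finset (Fin K)) P.parts).card := by
      have := dvd_sum_mul_card hKpos P.parts
      rwa [P.parts_sum] at this
    have h2 : N ∣ m * (FF (Finset.univ : Finset (Fin K)) P.parts).card :=
      dvd_trans hNdvdK h1
    have h3 : (FF (Finset.univ : Finset (Fin K)) P.parts).card * (N - m)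
        = N * (FF (Finset.univ : Finset (Fin K)) P.parts).card
          - m * (FF (Finset.univ : Finset (Fin K)) P.parts).card := by
      rw [mul_comm _ (N - m), tsub_mul]
    rw [h3]
    exact Nat.dvd_sub (Dvd.intro _ rfl) h2
  rw [Finset.sum_congr rfl (fun m hm => Finset.sum_congr rfl (fun P _ => hterm m hm P))]
  -- multiply both sides by N
  have hmulN : N * (∑ m ∈ Finset.range (n + 1), ∑ P : Nat.Partition m,
        (FF (Finset.univ : Finset (Fin K)) P.parts).card * (N - m) / N)
      = (N + K).choose (K + 1) := by
    rw [Finset.mul_sum]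
    have step : ∀ m ∈ Finset.range (n + 1),
        N * (∑ P : Nat.Partition m,
          (FF (Finset.univ : Finset (Fin K)) P.parts).card * (N - m) / N)
        = (N - m) * (K - 1 + m).choose m := by
      intro m hm
      rw [Finset.mul_sum,
        Finset.sum_congr rfl (fun P hP => Nat.mul_div_cancel' (hdvd m hm P)),
        ← Finset.sum_mul, partition_sum_card]
      have : K + m - 1 = K - 1 + m := by omega
      rw [this, mul_comm]
    rw [Finset.sum_congr rfl step, ← hN]
    exact hs2 K (by omega) N
  -- identities about the RHS
  have hNKeq : (k + 1) * (n + 1) = N + K := by rw [hK, hN]; ring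
  have hid : (N + K).choose (K + 1) * (K + 1) = (N + K).choose N * N := by
    have h1 := Nat.choose_succ_right_eq (N + K) K
    have h2 : N + K - K = N := by omega
    have h3 : (N + K).choose K = (N + K).choose N := by
      have h := Nat.choose_symm (n := N + K) (k := K) (by omega)
      rw [Nat.add_sub_cancel] at h
      exact h.symm
    rw [h1, h2, h3]
  have hcop : Nat.Coprime (K + 1) N := by
    rw [hK, hN]
    have : k * (n + 1) + 1 = (n + 1) * k + 1 := by ring
    rw [this]
    simp [Nat.coprime_mul_left_add_left]
  have hdvd2 : (K + 1) ∣ (N + K).choose N :=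
    hcop.dvd_of_dvd_mul_right ⟨(N + K).choose (K + 1), by rw [← hid]; ring⟩
  have hR : (K + 1) * ((N + K).choose N / (K + 1)) = (N + K).choose N :=
    Nat.mul_div_cancel' hdvd2
  have hfin : N * ((N + K).choose N / (K + 1)) = (N + K).choose (K + 1) := by
    have h4 : (K + 1) * (N * ((N + K).choose N / (K + 1)))
        = (K + 1) * ((N + K).choose (K + 1)) := by
      calc (K + 1) * (N * ((N + K).choose N / (K + 1)))
          = ((K + 1) * ((N + K).choose N / (K + 1))) * N := by ring
        _ = (N + K).choose N * N := by rw [hR]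
        _ = (K + 1) * ((N + K).choose (K + 1)) := by rw [← hid]; ring
    exact Nat.eq_of_mul_eq_mul_left (by omega) h4
  rw [hNKeq]
  have : n + 1 = N := hN.symm
  rw [this]
  refine Nat.eq_of_mul_eq_mul_left hNpos ?_
  rw [hmulN, hfin]
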